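/- arXiv:2601.05158 — 2 statements merged into one kernel-verified Lean document; each statement's English description precedes it below -/
import Mathlib

section
/- Let P : M_N(ℂ) → M_N(ℂ) be a linear map with P ∘ P = P, let γ ≥ 0, and let S := {O ∈ M_N(ℂ) : O positive semidefinite, P(O) = O, Tr[O] ≤ γ} be the associated quantum object set. Let {Õ_{a|x}} ⊆ S (a ∈ A, x ∈ X finite) be an assemblage, i.e. Tr[Σ_a Õ_{a|x}] = γ for every x. Then the following are equivalent: (1) there exists Õ ∈ S with Σ_a Õ_{a|x} = Õ for all x (the assemblage is non-signalling); (2) there exist a finite dimension d_A, a family of POVMs {M_{a|x}} on ℂ^{d_A}, and a vector |ω⟩ ∈ ℂ^{d_A} ⊗ ℂ^N such that Ω̃ := |ω⟩⟨ω| satisfies Tr_A[Ω̃] ∈ S (equivalently P(Tr_A[Ω̃]) = Tr_A[Ω̃] and Tr[Ω̃] ≤ γ) and Õ_{a|x} = Tr_A[(M_{a|x} ⊗ 𝟙_N)Ω̃] for all a, x. -/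
open Matrix
open scoped Matrix Kronecker ComplexOrder

noncomputable section

/-- Partial trace over the first tensor factor. -/
def ptraceFst {m n : Type*} [Fintype m]
    (W : Matrix (m × n) (m × n) ℂ) : Matrix n n ℂ :=
  fun k l => ∑ i : m, W (i, k) (i, l)

/-- The rank-one projector `|ω⟩⟨ω|`. -/
def outer {n : Type*} (ψ : n → ℂ) : Matrix n n ℂ :=
  Matrix.vecMulVec ψ (star ψ)

/-- A POVM: a family of positive semidefinite matrices summing to the identity. -/
def IsPOVM {n : Type*} [Fintype n] [DecidableEq n] {A : Type*} [Fintype A]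
    (M : A → Matrix n n ℂ) : Prop :=
  (∀ a, (M a).PosSemidef) ∧ ∑ a, M a = 1

/-- Membership in the quantum object set determined by the idempotent linear
map `P` and the normalization constant `γ`. -/
def MemQObj {N : ℕ}
    (P : Matrix (Fin N) (Fin N) ℂ →ₗ[ℂ] Matrix (Fin N) (Fin N) ℂ) (γ : ℝ)
    (O : Matrix (Fin N) (Fin N) ℂ) : Prop :=
  O.PosSemidef ∧ P O = O ∧ O.trace ≤ (γ : ℂ)

/-- Key computation: the partial trace of `(M ⊗ 1) |ω⟩⟨ω|` as a matrix product. -/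
lemma sghjw_key {dA N : ℕ} (M : Matrix (Fin dA) (Fin dA) ℂ) (ω : Fin dA × Fin N → ℂ) :
    ptraceFst ((M ⊗ₖ (1 : Matrix (Fin N) (Fin N) ℂ)) * outer ω)
      = (Matrix.of fun i k => (starRingEnd ℂ) (ω (i, k)))ᴴ * Mᵀ *
        (Matrix.of fun i k => (starRingEnd ℂ) (ω (i, k))) := by
  ext k l
  simp only [ptraceFst, Matrix.mul_apply, Matrix.kroneckerMap_apply, outer,
    Matrix.vecMulVec_apply, Pi.star_apply, Matrix.one_apply, Matrix.conjTranspose_apply,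
    Matrix.of_apply, Matrix.transpose_apply, Fintype.sum_prod_type, RCLike.star_def,
    Complex.conj_conj, mul_ite, ite_mul, mul_zero, zero_mul, mul_one,
    Finset.sum_ite_eq, Finset.mem_univ, if_true]
  simp only [Finset.sum_mul]
  apply Finset.sum_congr rfl
  intro p _
  apply Finset.sum_congr rfl
  intro i _
  ring

/-- Diagonal entry of a PSD matrix is a nonnegative real. -/
lemma sghjw_psd_diag_real {n : ℕ} {Amat : Matrix (Fin n) (Fin n) ℂ} (hA : Amat.PosSemidef)
    (i : Fin n) : ∃ r : ℝ, 0 ≤ r ∧ Amat i i = (r : ℂ) := by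
  obtain ⟨B, rfl⟩ : ∃ B : Matrix (Fin n) (Fin n) ℂ, Amat = Bᴴ * B := by
    open scoped MatrixOrder in
    obtain ⟨B, hB⟩ := CStarAlgebra.nonneg_iff_eq_star_mul_self.mp hA.nonneg
    exact ⟨B, by rw [hB, Matrix.star_eq_conjTranspose]⟩
  refine ⟨∑ k, Complex.normSq (B k i), Finset.sum_nonneg fun _ _ => Complex.normSq_nonneg _, ?_⟩
  simp [Matrix.mul_apply, Matrix.conjTranspose_apply, ← Complex.normSq_eq_conj_mul_self]

/-- A PSD matrix with vanishing diagonal entry has vanishing row and column there. -/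
lemma sghjw_psd_row_eq_zero {n : ℕ} {Amat : Matrix (Fin n) (Fin n) ℂ} (hA : Amat.PosSemidef)
    {i : Fin n} (h : Amat i i = 0) (j : Fin n) : Amat i j = 0 ∧ Amat j i = 0 := by
  obtain ⟨B, rfl⟩ : ∃ B : Matrix (Fin n) (Fin n) ℂ, Amat = Bᴴ * B := by
    open scoped MatrixOrder in
    obtain ⟨B, hB⟩ := CStarAlgebra.nonneg_iff_eq_star_mul_self.mp hA.nonneg
    exact ⟨B, by rw [hB, Matrix.star_eq_conjTranspose]⟩
  have h' : (∑ k, Complex.normSq (B k i)) = 0 := by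
    have : ((∑ k, Complex.normSq (B k i) : ℝ) : ℂ) = 0 := by
      rw [← h]
      simp [Matrix.mul_apply, Matrix.conjTranspose_apply, ← Complex.normSq_eq_conj_mul_self]
    exact_mod_cast this
  have hz : ∀ k, B k i = 0 := fun k => Complex.normSq_eq_zero.mp
    ((Finset.sum_eq_zero_iff_of_nonneg (fun k _ => Complex.normSq_nonneg (B k i))).mp h' k
      (Finset.mem_univ k))
  constructor <;> simp [Matrix.mul_apply, Matrix.conjTranspose_apply, hz]

/-- simultaneous purification for assemblages of arbitrary
quantum objects: an assemblage of quantum objects is non-signalling iff it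
arises from a pure extended quantum object and measurements on the auxiliary
factor. -/
theorem sghjw_quantum_objects {N : ℕ} {A X : Type} [Fintype A] [Fintype X]
    (P : Matrix (Fin N) (Fin N) ℂ →ₗ[ℂ] Matrix (Fin N) (Fin N) ℂ)
    (hP : ∀ O, P (P O) = P O)
    (γ : ℝ) (hγ : 0 ≤ γ)
    (O : A → X → Matrix (Fin N) (Fin N) ℂ)
    (hmem : ∀ a x, MemQObj P γ (O a x))
    (hassem : ∀ x, (∑ a, O a x).trace = (γ : ℂ)) :
    (∃ O₀, MemQObj P γ O₀ ∧ ∀ x, ∑ a, O a x = O₀)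
    ↔
    (∃ (dA : ℕ) (M : A → X → Matrix (Fin dA) (Fin dA) ℂ)
        (ω : Fin dA × Fin N → ℂ),
      (∀ x, IsPOVM (fun a => M a x)) ∧
      MemQObj P γ (ptraceFst (outer ω)) ∧
      (∀ a x, O a x =
        ptraceFst ((M a x ⊗ₖ (1 : Matrix (Fin N) (Fin N) ℂ)) * outer ω))) := by
  constructor
  · rintro ⟨O₀, hO₀, hsum⟩
    rcases isEmpty_or_nonempty A with hA | hA
    · -- degenerate case: no outcomes, take `dA = 0`
      refine ⟨0, fun _ _ => 0, fun _ => 0, ?_, ?_, ?_⟩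
      · intro x
        exact ⟨fun a => (IsEmpty.elim hA a), Subsingleton.elim _ _⟩
      · have h0 : ptraceFst (outer (fun _ : Fin 0 × Fin N => (0:ℂ))) = 0 := by
          ext k l; simp [ptraceFst]
        rw [h0]
        exact ⟨Matrix.PosSemidef.zero, map_zero P, by
          rw [Matrix.trace_zero]; exact_mod_cast hγ⟩
      · intro a x; exact (IsEmpty.elim hA a)
    · obtain ⟨a₀⟩ := hA
      classical
      have h0 : O₀.PosSemidef := hO₀.1
      have hH : O₀.IsHermitian := h0.1
      set U : Matrix (Fin N) (Fin N) ℂ := (hH.eigenvectorUnitary : Matrix (Fin N) (Fin N) ℂ)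
        with hUdef
      have hU1 : Uᴴ * U = 1 := by
        rw [← Matrix.star_eq_conjTranspose]
        exact Unitary.star_mul_self_of_mem hH.eigenvectorUnitary.2
      have hU2 : U * Uᴴ = 1 := by
        rw [← Matrix.star_eq_conjTranspose]
        exact Unitary.mul_star_self_of_mem hH.eigenvectorUnitary.2
      set d : Fin N → ℝ := hH.eigenvalues with hddef
      have hdnn : ∀ i, 0 ≤ d i := fun i => h0.eigenvalues_nonneg i
      set dc : Fin N → ℂ := fun i => (d i : ℂ) with hdcdef
      have hspec : O₀ = U * Matrix.diagonal dc * Uᴴ := by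
        have := hH.spectral_theorem
        rw [← Matrix.star_eq_conjTranspose]
        exact this
      set s : Fin N → ℂ := fun i => (Real.sqrt (d i) : ℂ) with hsdef
      set s' : Fin N → ℂ := fun i => if d i = 0 then 0 else ((Real.sqrt (d i))⁻¹ : ℂ) with hs'def
      set κ : Fin N → ℂ := fun i => if d i = 0 then 1 else 0 with hκdef
      set e : Fin N → ℂ := fun i => if d i = 0 then 0 else 1 with hedef
      have hstars : star s = s := by
        funext i; simp [hsdef, Complex.conj_ofReal]
      have hstars' : star s' = s' := by
        funext i
        simp only [Pi.star_apply, hs'def]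
        split <;> simp [← Complex.ofReal_inv, Complex.conj_ofReal]
      have hsqrt_ne : ∀ i, ¬ d i = 0 → Real.sqrt (d i) ≠ 0 := fun i hi =>
        Real.sqrt_ne_zero'.mpr (lt_of_le_of_ne (hdnn i) (Ne.symm hi))
      have hss : (fun i => s i * s i) = dc := by
        funext i
        simp only [hsdef, hdcdef, ← Complex.ofReal_mul, Real.mul_self_sqrt (hdnn i)]
      have hss' : (fun i => s i * s' i) = e := by
        funext i
        simp only [hsdef, hs'def, hedef]
        split
        · simp
        · rename_i hi
          rw [← Complex.ofReal_inv, ← Complex.ofReal_mul,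
            mul_inv_cancel₀ (hsqrt_ne i hi), Complex.ofReal_one]
      have hs's : (fun i => s' i * s i) = e := by
        funext i
        rw [mul_comm]
        exact congrFun hss' i
      have hs'ds' : (fun i => s' i * (dc i * s' i)) = e := by
        funext i
        simp only [hsdef, hs'def, hdcdef, hedef]
        split
        · simp
        · rename_i hi
          rw [← Complex.ofReal_inv, ← Complex.ofReal_mul, ← Complex.ofReal_mul]
          norm_cast
          rw [show (Real.sqrt (d i))⁻¹ * (d i * (Real.sqrt (d i))⁻¹)
              = (d i) / (Real.sqrt (d i) * Real.sqrt (d i)) by ring,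
            Real.mul_self_sqrt (hdnn i), div_self hi]
      have hsκ : (fun i => s i * κ i) = (fun _ => (0 : ℂ)) := by
        funext i
        simp only [hsdef, hκdef]
        split
        · rename_i hi; rw [hi]; simp
        · simp
      have heκ : (fun i => e i + κ i) = (fun _ => (1 : ℂ)) := by
        funext i
        simp only [hedef, hκdef]
        split <;> simp
      set W : Matrix (Fin N) (Fin N) ℂ := Matrix.diagonal s * Uᴴ with hWdef
      set L : Matrix (Fin N) (Fin N) ℂ := Matrix.diagonal s' * Uᴴ with hLdef
      set K : Matrix (Fin N) (Fin N) ℂ := Matrix.diagonal κ with hKdef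
      set E : Matrix (Fin N) (Fin N) ℂ := U * Matrix.diagonal e * Uᴴ with hEdef
      have hU1' : ∀ B : Matrix (Fin N) (Fin N) ℂ, Uᴴ * (U * B) = B := fun B => by
        rw [← Matrix.mul_assoc, hU1, Matrix.one_mul]
      have hU2' : ∀ B : Matrix (Fin N) (Fin N) ℂ, U * (Uᴴ * B) = B := fun B => by
        rw [← Matrix.mul_assoc, hU2, Matrix.one_mul]
      have hWH : Wᴴ = U * Matrix.diagonal s := by
        rw [hWdef, Matrix.conjTranspose_mul, Matrix.conjTranspose_conjTranspose,
          Matrix.diagonal_conjTranspose, hstars]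
      have hLH : Lᴴ = U * Matrix.diagonal s' := by
        rw [hLdef, Matrix.conjTranspose_mul, Matrix.conjTranspose_conjTranspose,
          Matrix.diagonal_conjTranspose, hstars']
      have hWW : Wᴴ * W = O₀ := by
        rw [hWH, hWdef, hspec]
        simp only [Matrix.mul_assoc, ← Matrix.mul_assoc (Matrix.diagonal s),
          Matrix.diagonal_mul_diagonal]
        rw [hss]
      have hWL : Wᴴ * L = E := by
        rw [hWH, hLdef, hEdef]
        simp only [Matrix.mul_assoc, ← Matrix.mul_assoc (Matrix.diagonal s),
          Matrix.diagonal_mul_diagonal]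
        rw [hss']
      have hLHW : Lᴴ * W = E := by
        rw [hLH, hWdef, hEdef]
        simp only [Matrix.mul_assoc, ← Matrix.mul_assoc (Matrix.diagonal s'),
          Matrix.diagonal_mul_diagonal]
        rw [hs's]
      have hWK : Wᴴ * K = 0 := by
        rw [hWH, hKdef, Matrix.mul_assoc, Matrix.diagonal_mul_diagonal]
        rw [hsκ, Matrix.diagonal_zero, Matrix.mul_zero]
      have hLOL : L * O₀ * Lᴴ = Matrix.diagonal e := by
        rw [hLdef, hLH, hspec]
        simp only [Matrix.mul_assoc, hU1']
        simp only [Matrix.diagonal_mul_diagonal]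
        rw [hs'ds']
      -- support lemma
      have hsupp : ∀ a x, E * O a x * E = O a x := by
        intro a x
        have hOx : ∀ a', (Uᴴ * O a' x * U).PosSemidef :=
          fun a' => (hmem a' x).1.conjTranspose_mul_mul_same U
        have hsum' : ∑ a', Uᴴ * O a' x * U = Matrix.diagonal dc := by
          have h1 : ∑ a', Uᴴ * O a' x * U = Uᴴ * (∑ a', O a' x) * U := by
            rw [Finset.mul_sum, Finset.sum_mul]
          rw [h1, hsum x, hspec]
          simp only [Matrix.mul_assoc, hU1']
          rw [hU1, Matrix.mul_one]
        have hzero : ∀ i, d i = 0 → ∀ j, (Uᴴ * O a x * U) i j = 0 ∧ (Uᴴ * O a x * U) j i = 0 := by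
          intro i hi j
          have hdiag : (Uᴴ * O a x * U) i i = 0 := by
            choose r hr hr' using fun a' => sghjw_psd_diag_real (hOx a') i
            have hsum0 : ∑ a', ((r a' : ℝ) : ℂ) = 0 := by
              rw [Finset.sum_congr rfl fun a' _ => (hr' a').symm]
              rw [← Matrix.sum_apply i i Finset.univ (fun a' => Uᴴ * O a' x * U), hsum',
                Matrix.diagonal_apply_eq]
              simp [hdcdef, hi]
            have hrsum : (∑ a', r a') = 0 := by exact_mod_cast hsum0
            have hra : r a = 0 := (Finset.sum_eq_zero_iff_of_nonneg
              (fun a' _ => hr a')).mp hrsum a (Finset.mem_univ a)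
            rw [hr' a, hra, Complex.ofReal_zero]
          exact sghjw_psd_row_eq_zero (hOx a) hdiag j
        have hmid : Matrix.diagonal e * (Uᴴ * O a x * U) * Matrix.diagonal e
            = Uᴴ * O a x * U := by
          ext i j
          rw [Matrix.mul_diagonal, Matrix.diagonal_mul]
          by_cases hi : d i = 0
          · rw [(hzero i hi j).1]; ring
          · by_cases hj : d j = 0
            · rw [(hzero j hj i).2]; ring
            · simp [hedef, hi, hj]
        calc E * O a x * E
            = U * (Matrix.diagonal e * (Uᴴ * O a x * U) * Matrix.diagonal e) * Uᴴ := by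
              rw [hEdef]; simp only [Matrix.mul_assoc]
          _ = U * (Uᴴ * O a x * U) * Uᴴ := by rw [hmid]
          _ = O a x := by
              simp only [Matrix.mul_assoc, hU2', hU2, Matrix.mul_one]
      -- the POVM elements
      set Q : A → X → Matrix (Fin N) (Fin N) ℂ :=
        fun a x => L * O a x * Lᴴ + (if a = a₀ then K else 0) with hQdef
      have hQpsd : ∀ a x, (Q a x).PosSemidef := by
        intro a x
        apply Matrix.PosSemidef.add ((hmem a x).1.mul_mul_conjTranspose_same L)
        split
        · refine Matrix.posSemidef_diagonal_iff.mpr fun i => ?_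
          simp only [hκdef]
          split
          · exact zero_le_one
          · exact le_refl 0
        · exact Matrix.PosSemidef.zero
      have hQsum : ∀ x, ∑ a, Q a x = 1 := by
        intro x
        rw [hQdef]
        rw [Finset.sum_add_distrib]
        have h1 : ∑ a, L * O a x * Lᴴ = L * O₀ * Lᴴ := by
          rw [← hsum x, Finset.mul_sum, Finset.sum_mul]
        have h2 : ∑ a, (if a = a₀ then K else 0) = K := by
          simp [Finset.sum_ite_eq']
        rw [h1, h2, hLOL, hKdef, Matrix.diagonal_add, heκ, Matrix.diagonal_one]
      have hQW : ∀ a x, Wᴴ * Q a x * W = O a x := by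
        intro a x
        rw [hQdef]
        simp only [Matrix.mul_add, Matrix.add_mul]
        have hWL' : ∀ B : Matrix (Fin N) (Fin N) ℂ, Wᴴ * (L * B) = E * B := fun B => by
          rw [← Matrix.mul_assoc, hWL]
        have h1 : Wᴴ * (L * O a x * Lᴴ) * W = O a x := by
          simp only [Matrix.mul_assoc]
          rw [hLHW, hWL', ← Matrix.mul_assoc, hsupp a x]
        have h2 : Wᴴ * (if a = a₀ then K else 0) * W = 0 := by
          split
          · rw [hWK, Matrix.zero_mul]
          · rw [Matrix.mul_zero, Matrix.zero_mul]
        rw [h1, h2, add_zero]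
      -- assemble
      set ω : Fin N × Fin N → ℂ := fun p => (starRingEnd ℂ) (W p.1 p.2) with hωdef
      have hWof : (Matrix.of fun i k => (starRingEnd ℂ) (ω (i, k))) = W := by
        ext i k; simp [hωdef]
      have hptr : ptraceFst (outer ω) = O₀ := by
        have h := sghjw_key (1 : Matrix (Fin N) (Fin N) ℂ) ω
        rw [Matrix.one_kronecker_one, Matrix.one_mul, hWof, Matrix.transpose_one,
          Matrix.mul_one] at h
        rw [h, hWW]
      refine ⟨N, fun a x => (Q a x)ᵀ, ω, ?_, ?_, ?_⟩
      · intro x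
        constructor
        · exact fun a => (hQpsd a x).transpose
        · rw [← Matrix.transpose_sum, hQsum x, Matrix.transpose_one]
      · rw [hptr]; exact hO₀
      · intro a x
        rw [sghjw_key, hWof, Matrix.transpose_transpose, hQW a x]
  · rintro ⟨dA, M, ω, hPOVM, hmemΩ, hO⟩
    set W := (Matrix.of fun i k => (starRingEnd ℂ) (ω (i, k))) with hWdef
    have hptr : ptraceFst (outer ω) = Wᴴ * W := by
      have h := sghjw_key (1 : Matrix (Fin dA) (Fin dA) ℂ) ω
      rw [Matrix.one_kronecker_one, Matrix.one_mul, Matrix.transpose_one,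
        Matrix.mul_one] at h
      exact h
    refine ⟨ptraceFst (outer ω), hmemΩ, fun x => ?_⟩
    have : ∀ a, O a x = Wᴴ * (M a x)ᵀ * W := fun a => by
      rw [hO a x, sghjw_key]
    calc ∑ a, O a x = ∑ a, Wᴴ * (M a x)ᵀ * W := Finset.sum_congr rfl fun a _ => this a
      _ = Wᴴ * (∑ a, M a x)ᵀ * W := by
          rw [Matrix.transpose_sum, Matrix.mul_sum, Matrix.sum_mul]
      _ = Wᴴ * W := by rw [(hPOVM x).2, Matrix.transpose_one, Matrix.mul_one]
      _ = ptraceFst (outer ω) := hptr.symm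

end
end

section
/- Let {ρ_{a|x}} be an unsteerable state assemblage on ℂ^{d_1}, i.e. ρ_{a|x} = Σ_λ p(λ) p(a|x,λ) σ_λ with p a probability distribution on a finite set Λ, p(·|x,λ) conditional distributions, and σ_λ density matrices. Let {I_{b|y}} be an unsteerable instrument assemblage from M_{d_1}(ℂ) to M_{d_2}(ℂ), i.e. I_{b|y} = Σ_μ q(μ) q(b|y,μ) Λ_μ with q a probability distribution on a finite set M, q(·|y,μ) conditional distributions, and Λ_μ completely positive trace-preserving maps. Let {N_{c|z}} be a family of POVMs on ℂ^{d_2}. Then the correlations p(a,b,c|x,y,z) := Tr[N_{c|z} I_{b|y}(ρ_{a|x})] admit a tripartite Bell local model: setting r(c|z,λ,μ) := Tr[N_{c|z} Λ_μ(σ_λ)], one has p(a,b,c|x,y,z) = Σ_{λ,μ} p(λ) q(μ) p(a|x,λ) q(b|y,μ) r(c|z,λ,μ), where each r(·|z,λ,μ) is a probability distribution. -/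
open Matrix
open scoped Matrix ComplexOrder

noncomputable section

/-- The Choi matrix `∑_{i,j} E_{ij} ⊗ Φ(E_{ij})` of a linear map on matrices. -/
def choi {dI dO : ℕ}
    (Φ : Matrix (Fin dI) (Fin dI) ℂ →ₗ[ℂ] Matrix (Fin dO) (Fin dO) ℂ) :
    Matrix (Fin dI × Fin dO) (Fin dI × Fin dO) ℂ :=
  fun p q => Φ (Matrix.single p.1 q.1 1) p.2 q.2

/-- Complete positivity, characterized via the Choi matrix. -/
def IsCP {dI dO : ℕ}
    (Φ : Matrix (Fin dI) (Fin dI) ℂ →ₗ[ℂ] Matrix (Fin dO) (Fin dO) ℂ) : Prop :=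
  (choi Φ).PosSemidef

/-- Trace preservation. -/
def IsTP {dI dO : ℕ}
    (Φ : Matrix (Fin dI) (Fin dI) ℂ →ₗ[ℂ] Matrix (Fin dO) (Fin dO) ℂ) : Prop :=
  ∀ ρ : Matrix (Fin dI) (Fin dI) ℂ, (Φ ρ).trace = ρ.trace

lemma myTraceNonneg {n : Type*} [Fintype n] [DecidableEq n] {M : Matrix n n ℂ}
    (h : M.PosSemidef) : 0 ≤ M.trace := by
  rw [Matrix.trace]
  refine Finset.sum_nonneg fun i _ => ?_
  have := h.dotProduct_mulVec_nonneg (Pi.single i 1)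
  simpa [Matrix.mulVec, dotProduct, Pi.single_apply, Matrix.diag] using this

lemma sum_swap4 {α β γ δ : Type*} [Fintype α] [Fintype β] [Fintype γ] [Fintype δ]
    {R : Type*} [AddCommMonoid R] (f : α → β → γ → δ → R) :
    ∑ a, ∑ b, ∑ c, ∑ d, f a b c d = ∑ c, ∑ d, ∑ a, ∑ b, f a b c d := by
  calc ∑ a, ∑ b, ∑ c, ∑ d, f a b c d
      = ∑ a, ∑ c, ∑ b, ∑ d, f a b c d :=
        Finset.sum_congr rfl fun a _ => Finset.sum_comm
    _ = ∑ c, ∑ a, ∑ b, ∑ d, f a b c d := Finset.sum_comm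
    _ = ∑ c, ∑ a, ∑ d, ∑ b, f a b c d :=
        Finset.sum_congr rfl fun c _ => Finset.sum_congr rfl fun a _ =>
          Finset.sum_comm
    _ = ∑ c, ∑ d, ∑ a, ∑ b, f a b c d :=
        Finset.sum_congr rfl fun c _ => Finset.sum_comm

lemma lin_apply_entry {dI dO : ℕ}
    (Φ : Matrix (Fin dI) (Fin dI) ℂ →ₗ[ℂ] Matrix (Fin dO) (Fin dO) ℂ)
    (Xm : Matrix (Fin dI) (Fin dI) ℂ) (pp qq : Fin dO) :
    Φ Xm pp qq = ∑ i, ∑ j, Xm i j * choi Φ (i, pp) (j, qq) := by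
  conv_lhs => rw [Matrix.matrix_eq_sum_single Xm]
  rw [map_sum]
  simp only [Matrix.sum_apply]
  refine Finset.sum_congr rfl fun i _ => ?_
  rw [map_sum]
  simp only [Matrix.sum_apply]
  refine Finset.sum_congr rfl fun j _ => ?_
  have : Matrix.single i j (Xm i j)
      = Xm i j • Matrix.single i j 1 := by
    rw [Matrix.smul_single, smul_eq_mul, mul_one]
  rw [this, _root_.map_smul, Matrix.smul_apply, smul_eq_mul, choi]

open scoped MatrixOrder Matrix.Norms.L2Operator in
lemma psd_exists_eq_conjTranspose_mul_self {n : Type*} [Fintype n] [DecidableEq n]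
    {A : Matrix n n ℂ} (hA : A.PosSemidef) : ∃ B : Matrix n n ℂ, A = Bᴴ * B := by
  obtain ⟨B, hB⟩ := CStarAlgebra.nonneg_iff_eq_star_mul_self.mp hA.nonneg
  exact ⟨B, by rw [hB, Matrix.star_eq_conjTranspose]⟩

lemma cp_psd {dI dO : ℕ}
    {Φ : Matrix (Fin dI) (Fin dI) ℂ →ₗ[ℂ] Matrix (Fin dO) (Fin dO) ℂ}
    (hΦ : IsCP Φ) {σm : Matrix (Fin dI) (Fin dI) ℂ} (hσ : σm.PosSemidef) :
    (Φ σm).PosSemidef := by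
  obtain ⟨Bm, hB⟩ := psd_exists_eq_conjTranspose_mul_self hσ
  obtain ⟨Am, hA⟩ := psd_exists_eq_conjTranspose_mul_self hΦ
  have hσe : ∀ i j, σm i j = ∑ k, star (Bm k i) * Bm k j := by
    intro i j; rw [hB, Matrix.mul_apply]
    simp [Matrix.conjTranspose_apply]
  have hCe : ∀ (i j : Fin dI) (pp qq : Fin dO),
      choi Φ (i, pp) (j, qq) = ∑ s, star (Am s (i, pp)) * Am s (j, qq) := by
    intro i j pp qq; rw [hA, Matrix.mul_apply]
    simp [Matrix.conjTranspose_apply]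
  have key : Φ σm = (Matrix.of fun (ks : (Fin dI × Fin dO) × Fin dI) (qq : Fin dO) =>
      ∑ j, Bm ks.2 j * Am ks.1 (j, qq))ᴴ *
      (Matrix.of fun (ks : (Fin dI × Fin dO) × Fin dI) (qq : Fin dO) =>
      ∑ j, Bm ks.2 j * Am ks.1 (j, qq)) := by
    ext pp qq
    rw [lin_apply_entry, Matrix.mul_apply]
    simp only [Matrix.conjTranspose_apply]
    calc ∑ i, ∑ j, σm i j * choi Φ (i, pp) (j, qq)
        = ∑ i, ∑ j, ∑ k, ∑ s,
            (star (Bm k i) * Bm k j) * (star (Am s (i, pp)) * Am s (j, qq)) := by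
          refine Finset.sum_congr rfl fun i _ => Finset.sum_congr rfl fun j _ => ?_
          rw [hσe, hCe, Finset.sum_mul_sum]
      _ = ∑ k, ∑ s, ∑ i, ∑ j,
            (star (Bm k i) * Bm k j) * (star (Am s (i, pp)) * Am s (j, qq)) :=
          sum_swap4 _
      _ = ∑ s, ∑ k, ∑ i, ∑ j,
            (star (Bm k i) * Bm k j) * (star (Am s (i, pp)) * Am s (j, qq)) :=
          Finset.sum_comm
      _ = ∑ ks : (Fin dI × Fin dO) × Fin dI,
            star ((Matrix.of fun (ks : (Fin dI × Fin dO) × Fin dI) (qq : Fin dO) =>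
              ∑ j, Bm ks.2 j * Am ks.1 (j, qq)) ks pp) *
            ((Matrix.of fun (ks : (Fin dI × Fin dO) × Fin dI) (qq : Fin dO) =>
              ∑ j, Bm ks.2 j * Am ks.1 (j, qq)) ks qq) := by
          conv_rhs => rw [Fintype.sum_prod_type]
          refine Finset.sum_congr rfl fun s _ => Finset.sum_congr rfl fun k _ => ?_
          simp only [Matrix.of_apply, star_sum, star_mul', Finset.sum_mul,
            Finset.mul_sum]
          conv_rhs => rw [Finset.sum_comm]
          refine Finset.sum_congr rfl fun i _ => Finset.sum_congr rfl fun j _ => ?_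
          ring
  rw [key]
  exact Matrix.posSemidef_conjTranspose_mul_self _

/-- prepare-transform-measure correlations generated by an
unsteerable state assemblage and an unsteerable instrument assemblage admit a
tripartite Bell local model, with `r(c|z,λ,μ) = Tr[N_{c|z} Λ_μ(σ_λ)]`. -/
theorem unsteerable_sequential_gives_local {d₁ d₂ : ℕ}
    {A X B Y C Z Λ M : Type} [Fintype A] [Fintype X] [Fintype B] [Fintype Y]
    [Fintype C] [Fintype Z] [Fintype Λ] [Fintype M]
    (ρ : A → X → Matrix (Fin d₁) (Fin d₁) ℂ)
    (p : Λ → ℝ) (hp0 : ∀ l, 0 ≤ p l) (hp1 : ∑ l, p l = 1)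
    (pc : A → X → Λ → ℝ) (hpc0 : ∀ a x l, 0 ≤ pc a x l)
    (hpc1 : ∀ x l, ∑ a, pc a x l = 1)
    (σ : Λ → Matrix (Fin d₁) (Fin d₁) ℂ)
    (hσpsd : ∀ l, (σ l).PosSemidef) (hσtr : ∀ l, (σ l).trace = 1)
    (hρdecomp : ∀ a x, ρ a x = ∑ l, ((p l : ℂ) * (pc a x l : ℂ)) • σ l)
    (I : B → Y → (Matrix (Fin d₁) (Fin d₁) ℂ →ₗ[ℂ] Matrix (Fin d₂) (Fin d₂) ℂ))
    (q : M → ℝ) (hq0 : ∀ m, 0 ≤ q m) (hq1 : ∑ m, q m = 1)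
    (qc : B → Y → M → ℝ) (hqc0 : ∀ b y m, 0 ≤ qc b y m)
    (hqc1 : ∀ y m, ∑ b, qc b y m = 1)
    (Φ : M → (Matrix (Fin d₁) (Fin d₁) ℂ →ₗ[ℂ] Matrix (Fin d₂) (Fin d₂) ℂ))
    (hΦCP : ∀ m, IsCP (Φ m)) (hΦTP : ∀ m, IsTP (Φ m))
    (hIdecomp : ∀ b y, I b y = ∑ m, ((q m : ℂ) * (qc b y m : ℂ)) • Φ m)
    (N : C → Z → Matrix (Fin d₂) (Fin d₂) ℂ)
    (hN : ∀ z, IsPOVM (fun c => N c z)) :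
    -- each `r(·|z,λ,μ) := Tr[N_{·|z} Λ_μ(σ_λ)]` is a probability distribution …
    (∀ c z l m, 0 ≤ (N c z * Φ m (σ l)).trace) ∧
    (∀ z l m, ∑ c, (N c z * Φ m (σ l)).trace = 1) ∧
    -- … and the correlations admit a tripartite Bell local model
    (∀ a b c x y z,
      (N c z * I b y (ρ a x)).trace
        = ∑ l, ∑ m,
            (p l : ℂ) * (q m : ℂ) * (pc a x l : ℂ) * (qc b y m : ℂ)
              * (N c z * Φ m (σ l)).trace) := by
  refine ⟨?_, ?_, ?_⟩
  · intro c z l m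
    have hP := cp_psd (hΦCP m) (hσpsd l)
    obtain ⟨Bm, hB⟩ := psd_exists_eq_conjTranspose_mul_self ((hN z).1 c)
    rw [show N c z = Bmᴴ * Bm from hB, mul_assoc, Matrix.trace_mul_comm]
    exact myTraceNonneg (hP.mul_mul_conjTranspose_same Bm)
  · intro z l m
    calc ∑ c, (N c z * Φ m (σ l)).trace
        = ((∑ c, N c z) * Φ m (σ l)).trace := by
          rw [Finset.sum_mul, Matrix.trace_sum]
      _ = (Φ m (σ l)).trace := by rw [(hN z).2, one_mul]
      _ = 1 := by rw [hΦTP m, hσtr l]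
  · intro a b c x y z
    rw [hIdecomp, hρdecomp]
    simp only [LinearMap.sum_apply, LinearMap.smul_apply, map_sum,
      _root_.map_smul, Matrix.mul_sum, Matrix.mul_smul, Matrix.smul_mul,
      Matrix.trace_sum, Matrix.trace_smul, smul_eq_mul, Finset.mul_sum,
      Finset.smul_sum]
    refine Finset.sum_congr rfl fun l _ => Finset.sum_congr rfl fun m _ => ?_
    ring

end
end
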